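/- Fix η > 0, A ∈ ℝ^{n×m} and T ∈ ℕ. For every x ∈ Δ_n, the discrete-time reward of the constant strategy x(t) = x for t = 0, …, T−1 against the MWU learner with step η and zero initial history is at least the continuous-time reward of the constant strategy x(t) = x for t ∈ [0,T] against the Replicator Dynamics with the same η and zero initial history; that is, Σ_{t=0}^{T−1} f(t) ≥ ∫_0^T f(t) dt, where f(t) = ( Σ_{i=1}^m exp(−η·t·x^⊤A e_i)·x^⊤A e_i ) / ( Σ_{i=1}^m exp(−η·t·x^⊤A e_i) ). Consequently, R*_disc(0, T) ≥ R*_cont(0, T). -/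

import Mathlib

open MeasureTheory

/-- Componentwise cumulative play of a continuous-time strategy: `∫_0^t x(s) ds`. -/
noncomputable def cumX {n : ℕ} (x : ℝ → Fin n → ℝ) (t : ℝ) (k : Fin n) : ℝ :=
  ∫ s in (0:ℝ)..t, x s k

/-- The Replicator Dynamics learner's mixed strategy at time `t`. -/
noncomputable def contPlay {n m : ℕ} (η : ℝ) (A : Matrix (Fin n) (Fin m) ℝ)
    (h0 : Fin m → ℝ) (x : ℝ → Fin n → ℝ) (t : ℝ) (i : Fin m) : ℝ :=
  Real.exp (η * (h0 i - ∑ k, cumX x t k * A k i)) /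
    ∑ j, Real.exp (η * (h0 j - ∑ k, cumX x t k * A k j))

/-- The optimizer's continuous-time reward against the Replicator Dynamics. -/
noncomputable def Rcont {n m : ℕ} (η : ℝ) (A : Matrix (Fin n) (Fin m) ℝ)
    (h0 : Fin m → ℝ) (T : ℝ) (x : ℝ → Fin n → ℝ) : ℝ :=
  ∫ t in (0:ℝ)..T, ∑ k, ∑ i, x t k * A k i * contPlay η A h0 x t i

/-- The optimal continuous-time reward. -/
noncomputable def RcontStar {n m : ℕ} (η : ℝ) (A : Matrix (Fin n) (Fin m) ℝ)
    (h0 : Fin m → ℝ) (T : ℝ) : ℝ :=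
  sSup {r | ∃ x : ℝ → Fin n → ℝ, Measurable x ∧
    (∀ t ∈ Set.Icc (0:ℝ) T, x t ∈ stdSimplex ℝ (Fin n)) ∧ r = Rcont η A h0 T x}

/-- The MWU learner's mixed strategy at round `t`, with step `η`, initial history `h0`,
against the optimizer's past plays `x 0, …, x (t−1)` (learner matrix `−A`). -/
noncomputable def discPlay {n m : ℕ} (η : ℝ) (A : Matrix (Fin n) (Fin m) ℝ)
    (h0 : Fin m → ℝ) (x : ℕ → Fin n → ℝ) (t : ℕ) (i : Fin m) : ℝ :=
  Real.exp (η * (h0 i - ∑ s ∈ Finset.range t, ∑ k, x s k * A k i)) /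
    ∑ j, Real.exp (η * (h0 j - ∑ s ∈ Finset.range t, ∑ k, x s k * A k j))

/-- The optimizer's discrete-time reward over `T` rounds against the MWU learner. -/
noncomputable def Rdisc {n m : ℕ} (η : ℝ) (A : Matrix (Fin n) (Fin m) ℝ)
    (h0 : Fin m → ℝ) (T : ℕ) (x : ℕ → Fin n → ℝ) : ℝ :=
  ∑ t ∈ Finset.range T, ∑ k, ∑ i, x t k * A k i * discPlay η A h0 x t i

/-- The optimal discrete-time reward. -/
noncomputable def RdiscStar {n m : ℕ} (η : ℝ) (A : Matrix (Fin n) (Fin m) ℝ)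
    (h0 : Fin m → ℝ) (T : ℕ) : ℝ :=
  sSup {r | ∃ x : ℕ → Fin n → ℝ, (∀ t, x t ∈ stdSimplex ℝ (Fin n)) ∧
    r = Rdisc η A h0 T x}

namespace Stmt5Aux

variable {n m : ℕ}

noncomputable def SS (η : ℝ) (A : Matrix (Fin n) (Fin m) ℝ) (v : Fin n → ℝ) : ℝ :=
  ∑ j, Real.exp (-(η * ∑ k, v k * A k j))

noncomputable def PP (η : ℝ) (A : Matrix (Fin n) (Fin m) ℝ) (v : Fin n → ℝ) (i : Fin m) : ℝ :=
  Real.exp (-(η * ∑ k, v k * A k i)) / SS η A v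

noncomputable def GG (η : ℝ) (A : Matrix (Fin n) (Fin m) ℝ) (v : Fin n → ℝ) : ℝ :=
  (Real.log m - Real.log (SS η A v)) / η

lemma SS_pos (hm : 0 < m) (η : ℝ) (A : Matrix (Fin n) (Fin m) ℝ) (v : Fin n → ℝ) :
    0 < SS η A v := by
  apply Finset.sum_pos (fun j _ => Real.exp_pos _)
  exact ⟨⟨0, hm⟩, Finset.mem_univ _⟩

lemma PP_nonneg (hm : 0 < m) (η : ℝ) (A : Matrix (Fin n) (Fin m) ℝ) (v : Fin n → ℝ) (i : Fin m) :
    0 ≤ PP η A v i :=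
  div_nonneg (Real.exp_pos _).le (SS_pos hm η A v).le

lemma PP_sum (hm : 0 < m) (η : ℝ) (A : Matrix (Fin n) (Fin m) ℝ) (v : Fin n → ℝ) :
    ∑ i, PP η A v i = 1 := by
  simp only [PP]
  rw [← Finset.sum_div]
  exact div_self (SS_pos hm η A v).ne'

lemma GG_zero (η : ℝ) (A : Matrix (Fin n) (Fin m) ℝ) :
    GG η A (fun _ => 0) = 0 := by
  have : SS η A (fun (_ : Fin n) => (0:ℝ)) = m := by
    simp [SS]
  simp [GG, this]

/-- Gradient inequality (concavity of `GG`). -/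
lemma gradIneq (hm : 0 < m) {η : ℝ} (hη : 0 < η) (A : Matrix (Fin n) (Fin m) ℝ)
    (u v : Fin n → ℝ) :
    GG η A v - GG η A u ≤ ∑ k, (v k - u k) * ∑ j, PP η A u j * A k j := by
  set δ : Fin m → ℝ := fun j => -(η * ∑ k, (v k - u k) * A k j) with hδ
  set b : ℝ := ∑ j, PP η A u j * δ j with hb
  have hSu := SS_pos hm η A u
  have hSv := SS_pos hm η A v
  have hSv_eq : SS η A v = SS η A u * ∑ j, PP η A u j * Real.exp (δ j) := by
    rw [Finset.mul_sum, SS]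
    refine Finset.sum_congr rfl fun j _ => ?_
    rw [PP]
    have hclr : SS η A u * (Real.exp (-(η * ∑ k, u k * A k j)) / SS η A u * Real.exp (δ j))
        = Real.exp (-(η * ∑ k, u k * A k j)) * Real.exp (δ j) := by
      field_simp
    rw [hclr, ← Real.exp_add]
    congr 1
    have h4 : ∑ k, (v k - u k) * A k j = (∑ k, v k * A k j) - ∑ k, u k * A k j := by
      rw [← Finset.sum_sub_distrib]
      exact Finset.sum_congr rfl fun k _ => by ring
    rw [hδ]
    simp only [h4]
    ring
  have hJensen : Real.exp b ≤ ∑ j, PP η A u j * Real.exp (δ j) := by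
    have h1 : ∑ j, PP η A u j * Real.exp (δ j)
        = Real.exp b * ∑ j, PP η A u j * Real.exp (δ j - b) := by
      rw [Finset.mul_sum]
      refine Finset.sum_congr rfl fun j _ => ?_
      rw [Real.exp_sub]
      rw [mul_comm (Real.exp b), mul_assoc, div_mul_cancel₀ _ (Real.exp_pos b).ne']
    rw [h1]
    have h2 : (1:ℝ) ≤ ∑ j, PP η A u j * Real.exp (δ j - b) := by
      have h3 : ∑ j, PP η A u j * (1 + (δ j - b)) ≤ ∑ j, PP η A u j * Real.exp (δ j - b) :=
        Finset.sum_le_sum fun j _ => mul_le_mul_of_nonneg_left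
          (by linarith [Real.add_one_le_exp (δ j - b)]) (PP_nonneg hm η A u j)
      have h5 : ∑ j, PP η A u j * (1 + (δ j - b)) = 1 := by
        have heq : ∑ j, PP η A u j * (1 + (δ j - b))
            = (∑ j, PP η A u j) + ((∑ j, PP η A u j * δ j) - b * ∑ j, PP η A u j) := by
          calc ∑ j, PP η A u j * (1 + (δ j - b))
              = ∑ j, (PP η A u j + (PP η A u j * δ j - b * PP η A u j)) :=
                Finset.sum_congr rfl fun j _ => by ring
            _ = _ := by rw [Finset.sum_add_distrib, Finset.sum_sub_distrib, ← Finset.mul_sum]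
        rw [heq, PP_sum hm, ← hb]
        ring
      linarith
    nlinarith [Real.exp_pos b]
  have hSS_le : SS η A u * Real.exp b ≤ SS η A v := by
    rw [hSv_eq]
    exact mul_le_mul_of_nonneg_left hJensen hSu.le
  have hlog : Real.log (SS η A u) + b ≤ Real.log (SS η A v) := by
    have := Real.log_le_log (by positivity) hSS_le
    rwa [Real.log_mul hSu.ne' (Real.exp_pos b).ne', Real.log_exp] at this
  have hkey : -b = η * ∑ k, (v k - u k) * ∑ j, PP η A u j * A k j := by
    rw [hb]
    have l1 : ∑ j, PP η A u j * δ j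
        = ∑ j, ∑ k, -(η * (PP η A u j * ((v k - u k) * A k j))) := by
      refine Finset.sum_congr rfl fun j _ => ?_
      rw [hδ]
      simp only [mul_neg, neg_mul, Finset.mul_sum, Finset.sum_neg_distrib]
      congr 1
      refine Finset.sum_congr rfl fun k _ => by ring
    have l3 : ∑ k, ∑ j, -(η * (PP η A u j * ((v k - u k) * A k j)))
        = -(η * ∑ k, (v k - u k) * ∑ j, PP η A u j * A k j) := by
      calc ∑ k, ∑ j, -(η * (PP η A u j * ((v k - u k) * A k j)))
          = ∑ k, -(η * ((v k - u k) * ∑ j, PP η A u j * A k j)) := by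
            refine Finset.sum_congr rfl fun k _ => ?_
            rw [Finset.sum_neg_distrib]
            congr 1
            rw [Finset.mul_sum, Finset.mul_sum]
            exact Finset.sum_congr rfl fun j _ => by ring
        _ = _ := by rw [Finset.sum_neg_distrib, ← Finset.mul_sum]
    rw [l1, Finset.sum_comm, l3, neg_neg]
  have : GG η A v - GG η A u = (Real.log (SS η A u) - Real.log (SS η A v)) / η := by
    rw [GG, GG]; ring
  rw [this]
  rw [div_le_iff₀ hη]
  calc Real.log (SS η A u) - Real.log (SS η A v) ≤ -b := by linarith
    _ = η * ∑ k, (v k - u k) * ∑ j, PP η A u j * A k j := hkey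
    _ = (∑ k, (v k - u k) * ∑ j, PP η A u j * A k j) * η := by ring


lemma exp_split (η : ℝ) (A : Matrix (Fin n) (Fin m) ℝ) (u v : Fin n → ℝ) (j : Fin m) :
    Real.exp (-(η * ∑ k, v k * A k j))
      = Real.exp (-(η * ∑ k, u k * A k j)) * Real.exp (-(η * ∑ k, (v k - u k) * A k j)) := by
  rw [← Real.exp_add]
  congr 1
  have h4 : ∑ k, (v k - u k) * A k j = (∑ k, v k * A k j) - ∑ k, u k * A k j := by
    rw [← Finset.sum_sub_distrib]
    exact Finset.sum_congr rfl fun k _ => by ring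
  rw [h4]; ring

/-- Softmax stability: if all directional payoffs move by at most `ε`, the softmax moves
by at most `exp (2ηε) - 1` in total variation. -/
lemma PP_diff_sum_le (hm : 0 < m) {η : ℝ} (hη : 0 < η) (A : Matrix (Fin n) (Fin m) ℝ)
    (u v : Fin n → ℝ) {ε : ℝ} (hε : 0 ≤ ε)
    (hd : ∀ j, |∑ k, (v k - u k) * A k j| ≤ ε) :
    ∑ j, |PP η A v j - PP η A u j| ≤ Real.exp (2 * η * ε) - 1 := by
  have hSu := SS_pos hm η A u
  have hSv := SS_pos hm η A v
  have hδub : ∀ j, -(η * ∑ k, (v k - u k) * A k j) ≤ η * ε := by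
    intro j
    have := (abs_le.1 (hd j)).1
    nlinarith
  have hδlb : ∀ j, -(η * ε) ≤ -(η * ∑ k, (v k - u k) * A k j) := by
    intro j
    have := (abs_le.1 (hd j)).2
    nlinarith
  have hSv_ub : SS η A v ≤ Real.exp (η * ε) * SS η A u := by
    rw [SS, SS, Finset.mul_sum]
    refine Finset.sum_le_sum fun j _ => ?_
    rw [exp_split η A u v j, mul_comm]
    exact mul_le_mul_of_nonneg_right (Real.exp_le_exp.2 (hδub j)) (Real.exp_pos _).le
  have hSv_lb : Real.exp (-(η * ε)) * SS η A u ≤ SS η A v := by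
    rw [SS, SS, Finset.mul_sum]
    refine Finset.sum_le_sum fun j _ => ?_
    rw [exp_split η A u v j, mul_comm (Real.exp (-(η * ε)))]
    exact mul_le_mul_of_nonneg_left (Real.exp_le_exp.2 (hδlb j)) (Real.exp_pos _).le
  have hub : ∀ j, PP η A v j ≤ PP η A u j * Real.exp (2 * η * ε) := by
    intro j
    rw [PP, PP, div_mul_eq_mul_div, div_le_div_iff₀ hSv (SS_pos hm η A u)]
    rw [exp_split η A u v j]
    have hee : Real.exp (η * ε) = Real.exp (2 * η * ε) * Real.exp (-(η * ε)) := by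
      rw [← Real.exp_add]; congr 1; ring
    calc Real.exp (-(η * ∑ k, u k * A k j)) * Real.exp (-(η * ∑ k, (v k - u k) * A k j)) * SS η A u
        ≤ Real.exp (-(η * ∑ k, u k * A k j)) * Real.exp (η * ε) * SS η A u := by
          gcongr
          exact hδub j
      _ = Real.exp (-(η * ∑ k, u k * A k j)) * Real.exp (2 * η * ε) * (Real.exp (-(η * ε)) * SS η A u) := by
          rw [hee]; ring
      _ ≤ Real.exp (-(η * ∑ k, u k * A k j)) * Real.exp (2 * η * ε) * SS η A v := by
          gcongr
  have hlb : ∀ j, PP η A u j * Real.exp (-(2 * η * ε)) ≤ PP η A v j := by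
    intro j
    rw [PP, PP, div_mul_eq_mul_div, div_le_div_iff₀ (SS_pos hm η A u) hSv]
    rw [exp_split η A u v j]
    have hee : Real.exp (-(2 * η * ε)) * Real.exp (η * ε) = Real.exp (-(η * ε)) := by
      rw [← Real.exp_add]; congr 1; ring
    calc Real.exp (-(η * ∑ k, u k * A k j)) * Real.exp (-(2*η*ε)) * SS η A v
        ≤ Real.exp (-(η * ∑ k, u k * A k j)) * Real.exp (-(2*η*ε)) * (Real.exp (η * ε) * SS η A u) := by
          gcongr
      _ = Real.exp (-(η * ∑ k, u k * A k j)) * (Real.exp (-(2*η*ε)) * Real.exp (η * ε)) * SS η A u := by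
          ring
      _ = Real.exp (-(η * ∑ k, u k * A k j)) * Real.exp (-(η*ε)) * SS η A u := by rw [hee]
      _ ≤ Real.exp (-(η * ∑ k, u k * A k j)) * Real.exp (-(η * ∑ k, (v k - u k) * A k j)) * SS η A u := by
          gcongr
          exact (abs_le.1 (hd j)).2
  have habs : ∀ j, |PP η A v j - PP η A u j| ≤ PP η A u j * (Real.exp (2*η*ε) - 1) := by
    intro j
    have hp : 0 ≤ PP η A u j := div_nonneg (Real.exp_pos _).le hSu.le
    rw [abs_sub_le_iff]
    constructor
    · have := hub j; nlinarith
    · have hlbj := hlb j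
      have h1 : Real.exp (-(2*η*ε)) ≥ 1 - 2*η*ε := by linarith [Real.add_one_le_exp (-(2*η*ε))]
      have h2 : Real.exp (2*η*ε) ≥ 1 + 2*η*ε := by linarith [Real.add_one_le_exp (2*η*ε)]
      have hsum : (0:ℝ) ≤ Real.exp (2*η*ε) + Real.exp (-(2*η*ε)) - 2 := by linarith
      nlinarith [mul_nonneg hp hsum, hlbj]
  calc ∑ j, |PP η A v j - PP η A u j| ≤ ∑ j, PP η A u j * (Real.exp (2*η*ε) - 1) :=
        Finset.sum_le_sum fun j _ => habs j
    _ = Real.exp (2*η*ε) - 1 := by rw [← Finset.sum_mul, PP_sum hm, one_mul]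


/-! ### Integrability and cumulative-play facts -/

lemma intervalIntegrable_of_bdd {f : ℝ → ℝ} (hf : Measurable f) {C : ℝ}
    (hC : ∀ t, |f t| ≤ C) (a b : ℝ) : IntervalIntegrable f volume a b := by
  rw [intervalIntegrable_iff]
  refine Integrable.mono' (g := fun _ => C) ?_ hf.aestronglyMeasurable.restrict
    (ae_of_all _ fun t => by rw [Real.norm_eq_abs]; exact hC t)
  exact integrableOn_const measure_Ioc_lt_top.ne

lemma simplex_le_one {z : Fin n → ℝ} (hz : z ∈ stdSimplex ℝ (Fin n)) (k : Fin n) : z k ≤ 1 :=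
  hz.2 ▸ Finset.single_le_sum (fun i _ => hz.1 i) (Finset.mem_univ k)

variable {η : ℝ} {A : Matrix (Fin n) (Fin m) ℝ} {x : ℝ → Fin n → ℝ}

lemma xk_int (hx : Measurable x) (hs : ∀ t, x t ∈ stdSimplex ℝ (Fin n)) (k : Fin n) (a b : ℝ) :
    IntervalIntegrable (fun t => x t k) volume a b :=
  intervalIntegrable_of_bdd (f := fun t => x t k) ((measurable_pi_apply k).comp hx) (C := 1)
    (fun t => by rw [abs_of_nonneg ((hs t).1 k)]; exact simplex_le_one (hs t) k) a b

lemma cumX_sub (hx : Measurable x) (hs : ∀ t, x t ∈ stdSimplex ℝ (Fin n)) (k : Fin n) (a b : ℝ) :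
    cumX x b k - cumX x a k = ∫ t in a..b, x t k :=
  intervalIntegral.integral_interval_sub_left (xk_int hx hs k 0 b) (xk_int hx hs k 0 a)

lemma cumX_sub_nonneg (hx : Measurable x) (hs : ∀ t, x t ∈ stdSimplex ℝ (Fin n)) (k : Fin n)
    {a b : ℝ} (hab : a ≤ b) : 0 ≤ cumX x b k - cumX x a k := by
  rw [cumX_sub hx hs k]
  exact intervalIntegral.integral_nonneg hab (fun t _ => (hs t).1 k)

lemma cumX_sum_sub (hx : Measurable x) (hs : ∀ t, x t ∈ stdSimplex ℝ (Fin n)) (a b : ℝ) :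
    ∑ k, (cumX x b k - cumX x a k) = b - a := by
  have h1 : ∑ k, (cumX x b k - cumX x a k) = ∑ k, ∫ t in a..b, x t k :=
    Finset.sum_congr rfl fun k _ => cumX_sub hx hs k a b
  rw [h1, ← intervalIntegral.integral_finset_sum (fun k _ => xk_int hx hs k a b)]
  have h2 : (∫ t in a..b, ∑ k, x t k) = ∫ t in a..b, (1:ℝ) :=
    intervalIntegral.integral_congr (fun t _ => (hs t).2)
  rw [h2, intervalIntegral.integral_const, smul_eq_mul, mul_one]

lemma cumX_pay_bound {M : ℝ} (hM : ∀ k j, |A k j| ≤ M)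
    (hx : Measurable x) (hs : ∀ t, x t ∈ stdSimplex ℝ (Fin n)) {a b : ℝ} (hab : a ≤ b) (j : Fin m) :
    |∑ k, (cumX x a k - cumX x b k) * A k j| ≤ M * (b - a) := by
  calc |∑ k, (cumX x a k - cumX x b k) * A k j|
      ≤ ∑ k, |(cumX x a k - cumX x b k) * A k j| := Finset.abs_sum_le_sum_abs _ _
    _ = ∑ k, (cumX x b k - cumX x a k) * |A k j| := by
        refine Finset.sum_congr rfl fun k _ => ?_
        rw [abs_mul, abs_sub_comm, abs_of_nonneg (cumX_sub_nonneg hx hs k hab)]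
    _ ≤ ∑ k, (cumX x b k - cumX x a k) * M :=
        Finset.sum_le_sum fun k _ =>
          mul_le_mul_of_nonneg_left (hM k j) (cumX_sub_nonneg hx hs k hab)
    _ = M * (b - a) := by rw [← Finset.sum_mul, cumX_sum_sub hx hs a b]; ring

lemma PP_comp_cont (hm : 0 < m) {c : ℝ → Fin n → ℝ} (hc : ∀ k, Continuous fun t => c t k)
    (i : Fin m) : Continuous fun t => PP η A (c t) i := by
  have hnum : ∀ j : Fin m, Continuous fun t => Real.exp (-(η * ∑ k, c t k * A k j)) := by
    intro j
    exact Real.continuous_exp.comp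
      (((continuous_const.mul
        (continuous_finset_sum _ fun k _ => (hc k).mul continuous_const))).neg)
  show Continuous fun t => Real.exp (-(η * ∑ k, c t k * A k i)) / SS η A (c t)
  exact (hnum i).div (continuous_finset_sum _ fun j _ => hnum j)
    (fun t => (SS_pos hm η A (c t)).ne')

lemma cumX_cont (hx : Measurable x) (hs : ∀ t, x t ∈ stdSimplex ℝ (Fin n)) (k : Fin n) :
    Continuous fun t => cumX x t k := by
  show Continuous fun t => ∫ s in (0:ℝ)..t, x s k
  exact intervalIntegral.continuous_primitive (xk_int hx hs k) 0

lemma pay_bound (hm : 0 < m) {M : ℝ} (hM : ∀ k j, |A k j| ≤ M)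
    {y : Fin n → ℝ} (hy : y ∈ stdSimplex ℝ (Fin n)) (v : Fin n → ℝ) :
    |∑ k, ∑ i, y k * A k i * PP η A v i| ≤ M := by
  calc |∑ k, ∑ i, y k * A k i * PP η A v i|
      ≤ ∑ k, |∑ i, y k * A k i * PP η A v i| := Finset.abs_sum_le_sum_abs _ _
    _ ≤ ∑ k, ∑ i, |y k * A k i * PP η A v i| :=
        Finset.sum_le_sum fun k _ => Finset.abs_sum_le_sum_abs _ _
    _ ≤ ∑ k, ∑ i, y k * M * PP η A v i := by
        refine Finset.sum_le_sum fun k _ => Finset.sum_le_sum fun i _ => ?_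
        rw [abs_mul, abs_mul, abs_of_nonneg (hy.1 k), abs_of_nonneg (PP_nonneg hm η A v i)]
        have h1 : 0 ≤ y k := hy.1 k
        have h2 : 0 ≤ PP η A v i := PP_nonneg hm η A v i
        have h3 := hM k i
        exact mul_le_mul_of_nonneg_right (mul_le_mul_of_nonneg_left h3 h1) h2
    _ = M := by
        have h4 : ∀ k : Fin n, ∑ i, y k * M * PP η A v i = y k * M := by
          intro k
          rw [← Finset.mul_sum, PP_sum hm, mul_one]
        rw [Finset.sum_congr rfl fun k _ => h4 k, ← Finset.sum_mul, hy.2, one_mul]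

lemma integrand_int (hm : 0 < m) {M : ℝ} (hM : ∀ k j, |A k j| ≤ M)
    (hx : Measurable x) (hs : ∀ t, x t ∈ stdSimplex ℝ (Fin n)) (a b : ℝ) :
    IntervalIntegrable (fun t => ∑ k, ∑ i, x t k * A k i * PP η A (cumX x t) i) volume a b := by
  refine intervalIntegrable_of_bdd ?_ (C := M)
    (fun t => pay_bound hm hM (hs t) (cumX x t)) a b
  refine Finset.measurable_sum _ fun k _ => Finset.measurable_sum _ fun i _ => ?_
  exact (((measurable_pi_apply k).comp hx).mul_const (A k i)).mul
    ((PP_comp_cont hm (cumX_cont hx hs) i).measurable)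

/-! ### The key one-interval estimate -/

lemma step (hm : 0 < m) (hη : 0 < η) {M : ℝ} (hM0 : 0 ≤ M) (hM : ∀ k j, |A k j| ≤ M)
    (hx : Measurable x) (hs : ∀ t, x t ∈ stdSimplex ℝ (Fin n))
    {s u : ℝ} (hsu : s ≤ u) :
    (∫ t in s..u, ∑ k, ∑ i, x t k * A k i * PP η A (cumX x t) i)
      ≤ (GG η A (cumX x u) - GG η A (cumX x s))
        + M * (Real.exp (2*η*M*(u-s)) - 1) * (u-s) := by
  set w : Fin n → ℝ := fun k => ∑ i, PP η A (cumX x u) i * A k i with hw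
  set E : ℝ := M * (Real.exp (2*η*M*(u-s)) - 1) with hE
  have hE0 : 0 ≤ E :=
    mul_nonneg hM0 (by linarith [Real.one_le_exp (mul_nonneg (mul_nonneg
      (mul_nonneg (by norm_num : (0:ℝ) ≤ 2) hη.le) hM0) (sub_nonneg.2 hsu))])
  -- pointwise estimate on [s,u]
  have hpt : ∀ t ∈ Set.Icc s u,
      (∑ k, ∑ i, x t k * A k i * PP η A (cumX x t) i)
        ≤ (∑ k, x t k * w k) + E := by
    intro t ht
    have htu : t ≤ u := ht.2
    have hst : s ≤ t := ht.1
    have hPP : ∑ j, |PP η A (cumX x t) j - PP η A (cumX x u) j|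
        ≤ Real.exp (2*η*M*(u-s)) - 1 := by
      have h1 := PP_diff_sum_le hm hη A (cumX x u) (cumX x t)
        (ε := M * (u - t)) (mul_nonneg hM0 (sub_nonneg.2 htu))
        (fun j => cumX_pay_bound hM hx hs htu j)
      calc ∑ j, |PP η A (cumX x t) j - PP η A (cumX x u) j|
          ≤ Real.exp (2 * η * (M * (u - t))) - 1 := h1
        _ ≤ Real.exp (2*η*M*(u-s)) - 1 := by
            have h6 : 0 ≤ 2*η*M := mul_nonneg (by positivity) hM0
            have h7 := mul_le_mul_of_nonneg_left (show u - t ≤ u - s by linarith) h6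
            have h8 : 2 * η * (M * (u - t)) ≤ 2*η*M*(u-s) := by linarith [h7]
            linarith [Real.exp_le_exp.2 h8]
    have hdiff : ∀ k, |∑ i, (PP η A (cumX x t) i - PP η A (cumX x u) i) * A k i| ≤ E := by
      intro k
      calc |∑ i, (PP η A (cumX x t) i - PP η A (cumX x u) i) * A k i|
          ≤ ∑ i, |(PP η A (cumX x t) i - PP η A (cumX x u) i) * A k i| :=
            Finset.abs_sum_le_sum_abs _ _
        _ ≤ ∑ i, |PP η A (cumX x t) i - PP η A (cumX x u) i| * M := by
            refine Finset.sum_le_sum fun i _ => ?_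
            rw [abs_mul]
            exact mul_le_mul_of_nonneg_left (hM k i) (abs_nonneg _)
        _ = (∑ i, |PP η A (cumX x t) i - PP η A (cumX x u) i|) * M := by
            rw [Finset.sum_mul]
        _ ≤ (Real.exp (2*η*M*(u-s)) - 1) * M := by
            refine mul_le_mul_of_nonneg_right hPP hM0
        _ = E := by rw [hE]; ring
    have hsplit : (∑ k, ∑ i, x t k * A k i * PP η A (cumX x t) i)
        = (∑ k, x t k * w k)
          + ∑ k, x t k * (∑ i, (PP η A (cumX x t) i - PP η A (cumX x u) i) * A k i) := by
      rw [← Finset.sum_add_distrib]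
      refine Finset.sum_congr rfl fun k _ => ?_
      rw [hw, Finset.mul_sum, Finset.mul_sum, ← Finset.sum_add_distrib]
      refine Finset.sum_congr rfl fun i _ => by ring
    rw [hsplit]
    have h2 : ∑ k, x t k * (∑ i, (PP η A (cumX x t) i - PP η A (cumX x u) i) * A k i) ≤ E := by
      calc ∑ k, x t k * (∑ i, (PP η A (cumX x t) i - PP η A (cumX x u) i) * A k i)
          ≤ ∑ k, x t k * E := by
            refine Finset.sum_le_sum fun k _ => ?_
            exact mul_le_mul_of_nonneg_left
              ((le_abs_self _).trans (hdiff k)) ((hs t).1 k)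
        _ = E := by rw [← Finset.sum_mul, (hs t).2, one_mul]
    linarith
  -- integrate the pointwise estimate
  have hint1 := integrand_int (η := η) (x := x) hm hM hx hs s u
  have hint_xw : ∀ k : Fin n, IntervalIntegrable (fun t => x t k * w k) volume s u :=
    fun k => (xk_int hx hs k s u).mul_const (w k)
  have hint_sum : IntervalIntegrable (fun t => ∑ k, x t k * w k) volume s u := by
    have := IntervalIntegrable.sum (μ := volume) (a := s) (b := u) Finset.univ
      (f := fun k => fun t => x t k * w k) (fun k _ => hint_xw k)
    have heq : (∑ k : Fin n, fun t => x t k * w k) = fun t => ∑ k, x t k * w k := by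
      funext t; simp
    rwa [heq] at this
  have hint2 : IntervalIntegrable (fun t => (∑ k, x t k * w k) + E) volume s u :=
    hint_sum.add (intervalIntegrable_const)
  have hmono := intervalIntegral.integral_mono_on hsu hint1 hint2 hpt
  have hval : (∫ t in s..u, ((∑ k, x t k * w k) + E))
      = (∑ k, (cumX x u k - cumX x s k) * w k) + E * (u - s) := by
    rw [intervalIntegral.integral_add hint_sum intervalIntegrable_const,
      intervalIntegral.integral_finset_sum (fun k _ => hint_xw k),
      intervalIntegral.integral_const, smul_eq_mul]
    congr 1
    · refine Finset.sum_congr rfl fun k _ => ?_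
      rw [intervalIntegral.integral_mul_const, ← cumX_sub hx hs k s u]
    · ring
  have hgrad : (∑ k, (cumX x u k - cumX x s k) * w k)
      ≤ GG η A (cumX x u) - GG η A (cumX x s) := by
    have h1 := gradIneq hm hη A (cumX x u) (cumX x s)
    have h2 : ∑ k, (cumX x s k - cumX x u k) * w k
        = -∑ k, (cumX x u k - cumX x s k) * w k := by
      rw [← Finset.sum_neg_distrib]
      exact Finset.sum_congr rfl fun k _ => by ring
    rw [hw] at *
    linarith [h1, h2.symm.le]
  calc (∫ t in s..u, ∑ k, ∑ i, x t k * A k i * PP η A (cumX x t) i)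
      ≤ (∫ t in s..u, ((∑ k, x t k * w k) + E)) := hmono
    _ = (∑ k, (cumX x u k - cumX x s k) * w k) + E * (u - s) := hval
    _ ≤ (GG η A (cumX x u) - GG η A (cumX x s)) + E * (u-s) := by linarith
    _ = (GG η A (cumX x u) - GG η A (cumX x s)) + M * (Real.exp (2*η*M*(u-s)) - 1) * (u-s) := by
        rw [hE]


lemma exp_sub_one_le {h : ℝ} (h0 : 0 ≤ h) : Real.exp h - 1 ≤ h * Real.exp h := by
  have h1 : Real.exp (-h) * Real.exp h = 1 := by rw [← Real.exp_add]; simp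
  have h2 := mul_le_mul_of_nonneg_right (Real.add_one_le_exp (-h)) (Real.exp_pos h).le
  nlinarith

/-- Main continuous-time bound: the continuous reward is at most `GG` of the total
cumulative play. -/
lemma cont_le_GG (hm : 0 < m) (hη : 0 < η) {M : ℝ} (hM0 : 0 ≤ M) (hM : ∀ k j, |A k j| ≤ M)
    (hx : Measurable x) (hs : ∀ t, x t ∈ stdSimplex ℝ (Fin n)) {T : ℝ} (hT : 0 ≤ T) :
    (∫ t in (0:ℝ)..T, ∑ k, ∑ i, x t k * A k i * PP η A (cumX x t) i)
      ≤ GG η A (cumX x T) := by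
  have hGG0 : GG η A (cumX x 0) = 0 := by
    have hc0 : cumX x 0 = fun _ => (0:ℝ) := funext fun k => intervalIntegral.integral_same
    rw [hc0, GG_zero]
  set C : ℝ := 2*η*M^2*Real.exp (2*η*M*T)*T^2 with hCdef
  have hC0 : 0 ≤ C := by positivity
  refine le_of_forall_pos_le_add fun ε hε => ?_
  obtain ⟨N, hNgt⟩ := exists_nat_gt (C / ε)
  have hN0R : (0:ℝ) < N := lt_of_le_of_lt (div_nonneg hC0 hε.le) hNgt
  have hN0 : 0 < N := by exact_mod_cast hN0R
  have hN1 : (1:ℝ) ≤ N := by exact_mod_cast hN0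
  set h : ℝ := T / N with hhdef
  have hh0 : 0 ≤ h := div_nonneg hT (Nat.cast_nonneg N)
  have hhT : h ≤ T := div_le_self hT hN1
  set a : ℕ → ℝ := fun i => i * h with hadef
  have ha : ∀ i : ℕ, a (i+1) - a i = h := fun i => by
    simp only [hadef]; push_cast; ring
  have hmono : ∀ i : ℕ, a i ≤ a (i+1) := fun i => by have := ha i; linarith
  have haN : a N = T := by
    simp only [hadef, hhdef]
    field_simp
  have ha0 : a 0 = 0 := by simp [hadef]
  have hsum := intervalIntegral.sum_integral_adjacent_intervals (a := a) (n := N)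
    (μ := volume) (f := fun t => ∑ k, ∑ i, x t k * A k i * PP η A (cumX x t) i)
    (fun i _ => integrand_int hm hM hx hs _ _)
  have hstep : ∀ i ∈ Finset.range N,
      (∫ t in a i..a (i+1), ∑ k, ∑ i, x t k * A k i * PP η A (cumX x t) i)
        ≤ ((GG η A (cumX x (a (i+1))) - GG η A (cumX x (a i)))
            + M * (Real.exp (2*η*M*h) - 1) * h) := by
    intro i _
    have hst := step hm hη hM0 hM hx hs (hmono i)
    rwa [ha i] at hst
  have herr : (N:ℝ) * (M * (Real.exp (2*η*M*h) - 1) * h) ≤ C / N := by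
    have he1 : Real.exp (2*η*M*h) - 1 ≤ (2*η*M*h) * Real.exp (2*η*M*h) :=
      exp_sub_one_le (by positivity)
    have hηM : 0 ≤ 2*η*M := by positivity
    have he2 : Real.exp (2*η*M*h) ≤ Real.exp (2*η*M*T) :=
      Real.exp_le_exp.2 (by calc 2*η*M*h ≤ 2*η*M*T := mul_le_mul_of_nonneg_left hhT hηM)
    have he3 : Real.exp (2*η*M*h) - 1 ≤ (2*η*M*h) * Real.exp (2*η*M*T) := by
      have hp : 0 ≤ 2*η*M*h := by positivity
      have := mul_le_mul_of_nonneg_left he2 hp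
      linarith
    have hNh : (N:ℝ) * h = T := by rw [hhdef]; field_simp
    calc (N:ℝ) * (M * (Real.exp (2*η*M*h) - 1) * h)
        ≤ (N:ℝ) * (M * ((2*η*M*h) * Real.exp (2*η*M*T)) * h) := by
          have hMh : 0 ≤ (N:ℝ) * h := by positivity
          have := mul_le_mul_of_nonneg_left he3 hM0
          nlinarith [mul_le_mul_of_nonneg_left (mul_le_mul_of_nonneg_right this hh0) hN0R.le]
      _ = 2*η*M^2*Real.exp (2*η*M*T) * (((N:ℝ)*h) * h) := by ring
      _ = C / N := by
          rw [hNh, hCdef, hhdef]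
          rw [show T * (T / (N:ℝ)) = T^2 / N by rw [← mul_div_assoc, ← pow_two]]
          rw [← mul_div_assoc]
  have hfin : (∫ t in (0:ℝ)..T, ∑ k, ∑ i, x t k * A k i * PP η A (cumX x t) i)
      ≤ GG η A (cumX x T) + C / N := by
    calc (∫ t in (0:ℝ)..T, ∑ k, ∑ i, x t k * A k i * PP η A (cumX x t) i)
        = ∑ i ∈ Finset.range N, ∫ t in a i..a (i+1),
            ∑ k, ∑ i, x t k * A k i * PP η A (cumX x t) i := by rw [hsum, ha0, haN]
      _ ≤ ∑ i ∈ Finset.range N, ((GG η A (cumX x (a (i+1))) - GG η A (cumX x (a i)))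
            + M * (Real.exp (2*η*M*h) - 1) * h) := Finset.sum_le_sum hstep
      _ = (GG η A (cumX x (a N)) - GG η A (cumX x (a 0)))
            + N * (M * (Real.exp (2*η*M*h) - 1) * h) := by
          rw [Finset.sum_add_distrib, Finset.sum_range_sub
            (fun i => GG η A (cumX x (a i))), Finset.sum_const, Finset.card_range,
            nsmul_eq_mul]
      _ ≤ GG η A (cumX x T) + C / N := by
          rw [haN, ha0, hGG0]
          linarith [herr]
  have hCN : C / N ≤ ε := by
    rw [div_le_iff₀ hN0R]
    rw [div_lt_iff₀ hε] at hNgt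
    linarith
  linarith

/-! ### Discrete-side bound and bridges -/

lemma GG_le_disc (hm : 0 < m) (hη : 0 < η) {z : Fin n → ℝ} (hz : z ∈ stdSimplex ℝ (Fin n))
    (T : ℕ) :
    GG η A (fun k => (T:ℝ) * z k)
      ≤ ∑ t ∈ Finset.range T, ∑ k, ∑ i, z k * A k i * PP η A (fun k' => (t:ℝ) * z k') i := by
  induction T with
  | zero =>
      have h0 : (fun k => ((0:ℕ):ℝ) * z k) = fun _ : Fin n => (0:ℝ) := by
        funext k; simp
      rw [h0, GG_zero]
      simp
  | succ T ih =>
      have hg := gradIneq hm hη A (fun k => (T:ℝ) * z k) (fun k => ((T+1:ℕ):ℝ) * z k)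
      have heq : ∑ k, (((T+1:ℕ):ℝ) * z k - (T:ℝ) * z k)
            * ∑ j, PP η A (fun k' => (T:ℝ) * z k') j * A k j
          = ∑ k, ∑ i, z k * A k i * PP η A (fun k' => (T:ℝ) * z k') i := by
        refine Finset.sum_congr rfl fun k _ => ?_
        have hco : ((T+1:ℕ):ℝ) * z k - (T:ℝ) * z k = z k := by push_cast; ring
        rw [hco, Finset.mul_sum]
        exact Finset.sum_congr rfl fun i _ => by ring
      rw [Finset.sum_range_succ]
      have hcast : ((T+1:ℕ):ℝ) = ((T:ℕ):ℝ) + 1 := by push_cast; ring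
      rw [heq] at hg
      calc GG η A (fun k => ((T+1:ℕ):ℝ) * z k)
          ≤ GG η A (fun k => (T:ℝ) * z k)
            + ∑ k, ∑ i, z k * A k i * PP η A (fun k' => (T:ℝ) * z k') i := by linarith
        _ ≤ _ := by
            have := ih
            linarith

lemma contPlay_eq (x : ℝ → Fin n → ℝ) (t : ℝ) (i : Fin m) :
    contPlay η A (fun _ => 0) x t i = PP η A (cumX x t) i := by
  have hterm : ∀ j : Fin m, η * ((0:ℝ) - ∑ k, cumX x t k * A k j)
      = -(η * ∑ k, cumX x t k * A k j) := fun j => by ring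
  rw [contPlay, PP, SS]
  rw [hterm i]
  congr 1
  exact Finset.sum_congr rfl fun j _ => by rw [hterm j]

lemma discPlay_eq (x : ℕ → Fin n → ℝ) (t : ℕ) (i : Fin m) :
    discPlay η A (fun _ => 0) x t i = PP η A (fun k => ∑ s ∈ Finset.range t, x s k) i := by
  have hterm : ∀ j : Fin m, η * ((0:ℝ) - ∑ s ∈ Finset.range t, ∑ k, x s k * A k j)
      = -(η * ∑ k, (∑ s ∈ Finset.range t, x s k) * A k j) := by
    intro j
    have hsw : ∑ k, (∑ s ∈ Finset.range t, x s k) * A k j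
        = ∑ s ∈ Finset.range t, ∑ k, x s k * A k j := by
      rw [Finset.sum_comm]
      refine Finset.sum_congr rfl fun k _ => ?_
      rw [Finset.sum_mul]
    rw [hsw]; ring
  rw [discPlay, PP, SS]
  rw [hterm i]
  congr 1
  exact Finset.sum_congr rfl fun j _ => by rw [hterm j]

lemma ratio_eq (hm : 0 < m) (η : ℝ) (A : Matrix (Fin n) (Fin m) ℝ) (t : ℝ) (z : Fin n → ℝ) :
    (∑ i, Real.exp (-(η * t * (∑ k, z k * A k i))) * (∑ k, z k * A k i)) /
      (∑ i, Real.exp (-(η * t * (∑ k, z k * A k i))))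
    = ∑ k, ∑ i, z k * A k i * PP η A (fun k' => t * z k') i := by
  have hexp : ∀ i : Fin m, -(η * ∑ k, (t * z k) * A k i) = -(η * t * (∑ k, z k * A k i)) := by
    intro i
    have h1 : ∑ k, (t * z k) * A k i = t * ∑ k, z k * A k i := by
      rw [Finset.mul_sum]
      exact Finset.sum_congr rfl fun k _ => by ring
    rw [h1]; ring
  have hS : SS η A (fun k' => t * z k') = ∑ i, Real.exp (-(η * t * (∑ k, z k * A k i))) := by
    rw [SS]
    exact Finset.sum_congr rfl fun i _ => by rw [hexp i]
  have hP : ∀ i : Fin m, PP η A (fun k' => t * z k') i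
      = Real.exp (-(η * t * (∑ k, z k * A k i))) / SS η A (fun k' => t * z k') := by
    intro i
    rw [PP, hexp i]
  symm
  calc ∑ k, ∑ i, z k * A k i * PP η A (fun k' => t * z k') i
      = ∑ i, (∑ k, z k * A k i) * PP η A (fun k' => t * z k') i := by
        rw [Finset.sum_comm]
        exact Finset.sum_congr rfl fun i _ => by rw [Finset.sum_mul]
    _ = ∑ i, Real.exp (-(η * t * (∑ k, z k * A k i))) * (∑ k, z k * A k i)
          / SS η A (fun k' => t * z k') := by
        refine Finset.sum_congr rfl fun i _ => ?_
        rw [hP i]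
        ring
    _ = _ := by rw [← Finset.sum_div, hS]

lemma absA_le (A : Matrix (Fin n) (Fin m) ℝ) (k : Fin n) (j : Fin m) :
    |A k j| ≤ ∑ k', ∑ j', |A k' j'| := by
  calc |A k j| ≤ ∑ j', |A k j'| :=
        Finset.single_le_sum (f := fun j' => |A k j'|) (fun _ _ => abs_nonneg _)
          (Finset.mem_univ j)
    _ ≤ ∑ k', ∑ j', |A k' j'| :=
        Finset.single_le_sum (f := fun k' => ∑ j', |A k' j'|)
          (fun _ _ => Finset.sum_nonneg fun _ _ => abs_nonneg _) (Finset.mem_univ k)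

lemma unif_mem (hn : 0 < n) : (fun _ : Fin n => (n:ℝ)⁻¹) ∈ stdSimplex ℝ (Fin n) := by
  constructor
  · intro k
    positivity
  · rw [Finset.sum_const, Finset.card_univ, Fintype.card_fin, nsmul_eq_mul]
    field_simp

lemma cumX_const (z : Fin n → ℝ) (t : ℝ) : cumX (fun _ => z) t = fun k => t * z k := by
  funext k
  show (∫ s in (0:ℝ)..t, z k) = t * z k
  rw [intervalIntegral.integral_const, smul_eq_mul, sub_zero]

lemma Rdisc_const_eq (η : ℝ) (A : Matrix (Fin n) (Fin m) ℝ) (T : ℕ) (z : Fin n → ℝ) :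
    Rdisc η A (fun _ => 0) T (fun _ => z)
      = ∑ t ∈ Finset.range T, ∑ k, ∑ i, z k * A k i * PP η A (fun k' => (t:ℝ) * z k') i := by
  simp only [Rdisc]
  refine Finset.sum_congr rfl fun t _ => ?_
  refine Finset.sum_congr rfl fun k _ => Finset.sum_congr rfl fun i _ => ?_
  rw [discPlay_eq]
  have hv : (fun k => ∑ _s ∈ Finset.range t, z k) = fun k' => (t:ℝ) * z k' := by
    funext k'
    rw [Finset.sum_const, Finset.card_range, nsmul_eq_mul]
  rw [hv]

lemma Rdisc_le (hm : 0 < m) {η : ℝ} {A : Matrix (Fin n) (Fin m) ℝ} {M : ℝ}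
    (hM : ∀ k j, |A k j| ≤ M) (T : ℕ) {x : ℕ → Fin n → ℝ}
    (hsx : ∀ t, x t ∈ stdSimplex ℝ (Fin n)) :
    Rdisc η A (fun _ => 0) T x ≤ (T:ℝ) * M := by
  simp only [Rdisc]
  calc ∑ t ∈ Finset.range T, ∑ k, ∑ i, x t k * A k i * discPlay η A (fun _ => 0) x t i
      ≤ ∑ _t ∈ Finset.range T, M := by
        refine Finset.sum_le_sum fun t _ => ?_
        have he : ∑ k, ∑ i, x t k * A k i * discPlay η A (fun _ => 0) x t i
            = ∑ k, ∑ i, x t k * A k i * PP η A (fun k => ∑ s ∈ Finset.range t, x s k) i := by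
          refine Finset.sum_congr rfl fun k _ => Finset.sum_congr rfl fun i _ => ?_
          rw [discPlay_eq]
        rw [he]
        exact (le_abs_self _).trans (pay_bound hm hM (hsx t) _)
    _ = (T:ℝ) * M := by rw [Finset.sum_const, Finset.card_range, nsmul_eq_mul]

end Stmt5Aux

/-- for every `x ∈ Δ_n`, the discrete-time reward of the constant
strategy `x` (the sum `Σ_{t<T} f(t)`) is at least the continuous-time reward of the
constant strategy `x` (the integral `∫_0^T f`), where
`f(t) = (Σ_i exp(−ηt·xᵀAe_i)·xᵀAe_i)/(Σ_i exp(−ηt·xᵀAe_i))`; consequently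
`R*_disc(0,T) ≥ R*_cont(0,T)`. -/
theorem stmt5 {n m : ℕ} (hn : 0 < n) (hm : 0 < m) (η : ℝ) (hη : 0 < η)
    (A : Matrix (Fin n) (Fin m) ℝ) (T : ℕ) :
    (∀ x ∈ stdSimplex ℝ (Fin n),
      (∫ t in (0:ℝ)..(T:ℝ),
          (∑ i, Real.exp (-(η * t * (∑ k, x k * A k i))) * (∑ k, x k * A k i)) /
            (∑ i, Real.exp (-(η * t * (∑ k, x k * A k i)))))
        ≤ ∑ t ∈ Finset.range T,
            (∑ i, Real.exp (-(η * (t : ℝ) * (∑ k, x k * A k i))) * (∑ k, x k * A k i)) /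
              (∑ i, Real.exp (-(η * (t : ℝ) * (∑ k, x k * A k i))))) ∧
    RcontStar η A (fun _ => 0) (T : ℝ) ≤ RdiscStar η A (fun _ => 0) T := by
  have hT0 : (0:ℝ) ≤ (T:ℝ) := Nat.cast_nonneg T
  set M : ℝ := ∑ k', ∑ j', |A k' j'| with hMdef
  have hM0 : 0 ≤ M := Finset.sum_nonneg fun _ _ => Finset.sum_nonneg fun _ _ => abs_nonneg _
  have hM : ∀ k j, |A k j| ≤ M := Stmt5Aux.absA_le A
  constructor
  · -- Part 1 : the integral-vs-sum inequality for constant strategies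
    intro z hz
    have hxm : Measurable (fun _ : ℝ => z) := measurable_const
    have hsim : ∀ t : ℝ, (fun _ : ℝ => z) t ∈ stdSimplex ℝ (Fin n) := fun _ => hz
    have h1 : (∫ t in (0:ℝ)..(T:ℝ),
          (∑ i, Real.exp (-(η * t * (∑ k, z k * A k i))) * (∑ k, z k * A k i)) /
            (∑ i, Real.exp (-(η * t * (∑ k, z k * A k i)))))
        = ∫ t in (0:ℝ)..(T:ℝ),
            ∑ k, ∑ i, z k * A k i * Stmt5Aux.PP η A (cumX (fun _ => z) t) i := by
      refine intervalIntegral.integral_congr fun t _ => ?_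
      rw [Stmt5Aux.cumX_const]
      exact Stmt5Aux.ratio_eq hm η A t z
    rw [h1]
    calc (∫ t in (0:ℝ)..(T:ℝ), ∑ k, ∑ i, z k * A k i * Stmt5Aux.PP η A (cumX (fun _ => z) t) i)
        ≤ Stmt5Aux.GG η A (cumX (fun _ => z) (T:ℝ)) :=
          Stmt5Aux.cont_le_GG hm hη hM0 hM hxm hsim hT0
      _ = Stmt5Aux.GG η A (fun k => (T:ℝ) * z k) := by rw [Stmt5Aux.cumX_const]
      _ ≤ ∑ t ∈ Finset.range T, ∑ k, ∑ i, z k * A k i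
            * Stmt5Aux.PP η A (fun k' => (t:ℝ) * z k') i := Stmt5Aux.GG_le_disc hm hη hz T
      _ = _ := Finset.sum_congr rfl fun t _ => (Stmt5Aux.ratio_eq hm η A (t:ℝ) z).symm
  · -- Part 2 : the suprema comparison
    have hRd : RdiscStar η A (fun _ => 0) T
        = sSup {r | ∃ x : ℕ → Fin n → ℝ, (∀ t, x t ∈ stdSimplex ℝ (Fin n)) ∧
            r = Rdisc η A (fun _ => 0) T x} := rfl
    have hRc : RcontStar η A (fun _ => 0) (T:ℝ)
        = sSup {r | ∃ x : ℝ → Fin n → ℝ, Measurable x ∧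
            (∀ t ∈ Set.Icc (0:ℝ) (T:ℝ), x t ∈ stdSimplex ℝ (Fin n)) ∧
            r = Rcont η A (fun _ => 0) (T:ℝ) x} := rfl
    have hDub : ∀ r ∈ {r | ∃ x : ℕ → Fin n → ℝ, (∀ t, x t ∈ stdSimplex ℝ (Fin n)) ∧
        r = Rdisc η A (fun _ => 0) T x}, r ≤ (T:ℝ) * M := by
      rintro r ⟨y, hy, rfl⟩
      exact Stmt5Aux.Rdisc_le hm hM T hy
    have hDbdd : BddAbove {r | ∃ x : ℕ → Fin n → ℝ, (∀ t, x t ∈ stdSimplex ℝ (Fin n)) ∧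
        r = Rdisc η A (fun _ => 0) T x} := ⟨(T:ℝ) * M, fun r hr => hDub r hr⟩
    rw [hRc, hRd]
    refine csSup_le ⟨Rcont η A (fun _ => 0) (T:ℝ) (fun _ _ => (n:ℝ)⁻¹),
      ⟨fun _ _ => (n:ℝ)⁻¹, measurable_const, fun t _ => Stmt5Aux.unif_mem hn, rfl⟩⟩ ?_
    rintro r ⟨x, hxm, hxs, rfl⟩
    -- replace x by a strategy that is simplex-valued everywhere
    set x' : ℝ → Fin n → ℝ :=
      fun t => if t ∈ Set.Icc (0:ℝ) (T:ℝ) then x t else fun _ => (n:ℝ)⁻¹ with hx'def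
    have hx'm : Measurable x' := Measurable.ite measurableSet_Icc hxm measurable_const
    have hx's : ∀ t, x' t ∈ stdSimplex ℝ (Fin n) := by
      intro t
      rw [hx'def]
      dsimp only
      split
      · exact hxs t ‹_›
      · exact Stmt5Aux.unif_mem hn
    have hcum : ∀ t ∈ Set.Icc (0:ℝ) (T:ℝ), cumX x t = cumX x' t := by
      intro t ht
      funext k
      refine intervalIntegral.integral_congr fun s hs => ?_
      have hsIcc : s ∈ Set.Icc (0:ℝ) (T:ℝ) := by
        rw [Set.uIcc_of_le ht.1] at hs
        exact ⟨hs.1, le_trans hs.2 ht.2⟩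
      show x s k = x' s k
      rw [hx'def]
      dsimp only
      rw [if_pos hsIcc]
    have hEq : Rcont η A (fun _ => 0) (T:ℝ) x = Rcont η A (fun _ => 0) (T:ℝ) x' := by
      simp only [Rcont]
      refine intervalIntegral.integral_congr fun t ht => ?_
      have htIcc : t ∈ Set.Icc (0:ℝ) (T:ℝ) := by rwa [Set.uIcc_of_le hT0] at ht
      have hxx : x t = x' t := by
        rw [hx'def]; dsimp only; rw [if_pos htIcc]
      refine Finset.sum_congr rfl fun k _ => Finset.sum_congr rfl fun i _ => ?_
      rw [hxx, Stmt5Aux.contPlay_eq, Stmt5Aux.contPlay_eq, hcum t htIcc]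
    have hle1 : Rcont η A (fun _ => 0) (T:ℝ) x' ≤ Stmt5Aux.GG η A (cumX x' (T:ℝ)) := by
      have hb : Rcont η A (fun _ => 0) (T:ℝ) x'
          = ∫ t in (0:ℝ)..(T:ℝ), ∑ k, ∑ i, x' t k * A k i * Stmt5Aux.PP η A (cumX x' t) i := by
        simp only [Rcont]
        refine intervalIntegral.integral_congr fun t _ => ?_
        exact Finset.sum_congr rfl fun k _ => Finset.sum_congr rfl fun i _ => by
          rw [Stmt5Aux.contPlay_eq]
      rw [hb]
      exact Stmt5Aux.cont_le_GG hm hη hM0 hM hx'm hx's hT0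
    rcases Nat.eq_zero_or_pos T with hT | hTpos
    · have h0 : Rcont η A (fun _ => 0) (T:ℝ) x = 0 := by
        simp only [Rcont, hT, Nat.cast_zero, intervalIntegral.integral_same]
      rw [h0]
      refine le_csSup hDbdd ⟨fun _ _ => (n:ℝ)⁻¹, fun _ => Stmt5Aux.unif_mem hn, ?_⟩
      simp [Rdisc, hT]
    · have hTR : (0:ℝ) < (T:ℝ) := by exact_mod_cast hTpos
      have hc0 : ∀ k, cumX x' 0 k = 0 := fun k => intervalIntegral.integral_same
      set c : Fin n → ℝ := cumX x' (T:ℝ) with hcdef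
      set z : Fin n → ℝ := fun k => c k / T with hzdef
      have hcnn : ∀ k, 0 ≤ c k := by
        intro k
        have h5 := Stmt5Aux.cumX_sub_nonneg hx'm hx's k hT0
        rw [hc0 k] at h5
        simpa [hcdef] using h5
      have hcsum : ∑ k, c k = (T:ℝ) := by
        have h6 := Stmt5Aux.cumX_sum_sub hx'm hx's 0 (T:ℝ)
        have h7 : ∑ k, (cumX x' (T:ℝ) k - cumX x' 0 k) = ∑ k, c k := by
          refine Finset.sum_congr rfl fun k _ => ?_
          rw [hc0 k, sub_zero, hcdef]
        rw [h7] at h6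
        rw [h6]
        ring
      have hzsum : ∑ k, z k = 1 := by
        rw [hzdef]
        rw [← Finset.sum_div, hcsum, div_self hTR.ne']
      have hz : z ∈ stdSimplex ℝ (Fin n) :=
        ⟨fun k => div_nonneg (hcnn k) hTR.le, hzsum⟩
      have hcz : c = fun k => (T:ℝ) * z k := by
        funext k
        rw [hzdef]
        field_simp
      calc Rcont η A (fun _ => 0) (T:ℝ) x
          = Rcont η A (fun _ => 0) (T:ℝ) x' := hEq
        _ ≤ Stmt5Aux.GG η A c := hle1
        _ = Stmt5Aux.GG η A (fun k => (T:ℝ) * z k) := by rw [← hcz]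
        _ ≤ ∑ t ∈ Finset.range T, ∑ k, ∑ i, z k * A k i
              * Stmt5Aux.PP η A (fun k' => (t:ℝ) * z k') i := Stmt5Aux.GG_le_disc hm hη hz T
        _ = Rdisc η A (fun _ => 0) T (fun _ => z) := (Stmt5Aux.Rdisc_const_eq η A T z).symm
        _ ≤ _ := le_csSup hDbdd ⟨fun _ => z, fun _ => hz, rfl⟩
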